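/- Let H₁, H₂, K₁, K₂ be real Hilbert spaces, and let L₁₁ : H₁ → K₁, L₁₂ : H₂ → K₁, L₂₁ : H₁ → K₂, L₂₂ : H₂ → K₂ be bounded linear operators. Let α₁, α₂, μ₁, μ₂ > 0. Suppose α₁‖L₁₂‖² + (α₁+α₂)‖L₂₂‖² < (4/3)μ₂ and α₂‖L₁₁‖² + (α₁+α₂)‖L₂₁‖² < (4/3)μ₁. Define the operator 𝕃 on H₁ × H₂ by 𝕃(v₁, v₂) = (α₁ L₁₁*(L₁₁ v₁ + L₁₂ v₂) + μ₁ v₁, α₂ L₁₂*(L₁₁ v₁ + L₁₂ v₂) + μ₂ v₂). Then there exists γ > 0 such that ⟨𝕃(v₁,v₂), (v₁,v₂)⟩ ≥ γ(‖v₁‖² + ‖v₂‖²) for all (v₁, v₂), and consequently 𝕃 is invertible. -/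

import Mathlib

open ContinuousLinearMap

/-- Two-player coercivity estimate for the Nash-equilibrium operator `𝕃`,
and its invertibility, under the smallness conditions (en2). -/
theorem nash_operator_coercive_and_invertible
    {H₁ H₂ K₁ K₂ : Type*}
    [NormedAddCommGroup H₁] [InnerProductSpace ℝ H₁] [CompleteSpace H₁]
    [NormedAddCommGroup H₂] [InnerProductSpace ℝ H₂] [CompleteSpace H₂]
    [NormedAddCommGroup K₁] [InnerProductSpace ℝ K₁] [CompleteSpace K₁]
    [NormedAddCommGroup K₂] [InnerProductSpace ℝ K₂] [CompleteSpace K₂]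
    (L₁₁ : H₁ →L[ℝ] K₁) (L₁₂ : H₂ →L[ℝ] K₁)
    (L₂₁ : H₁ →L[ℝ] K₂) (L₂₂ : H₂ →L[ℝ] K₂)
    (α₁ α₂ μ₁ μ₂ : ℝ) (hα₁ : 0 < α₁) (hα₂ : 0 < α₂) (hμ₁ : 0 < μ₁) (hμ₂ : 0 < μ₂)
    (hsmall₂ : α₁ * ‖L₁₂‖ ^ 2 + (α₁ + α₂) * ‖L₂₂‖ ^ 2 < 4 / 3 * μ₂)
    (hsmall₁ : α₂ * ‖L₁₁‖ ^ 2 + (α₁ + α₂) * ‖L₂₁‖ ^ 2 < 4 / 3 * μ₁)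
    (𝕃 : H₁ × H₂ → H₁ × H₂)
    (h𝕃 : ∀ v : H₁ × H₂,
      𝕃 v = (α₁ • (adjoint L₁₁) (L₁₁ v.1 + L₁₂ v.2) + μ₁ • v.1,
             α₂ • (adjoint L₁₂) (L₁₁ v.1 + L₁₂ v.2) + μ₂ • v.2)) :
    (∃ γ : ℝ, 0 < γ ∧ ∀ v : H₁ × H₂,
      γ * (‖v.1‖ ^ 2 + ‖v.2‖ ^ 2) ≤ (inner ℝ (𝕃 v).1 v.1 : ℝ) + (inner ℝ (𝕃 v).2 v.2 : ℝ)) ∧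
    Function.Bijective 𝕃 := by
  set γ₁ : ℝ := μ₁ - 3 / 4 * (α₂ * ‖L₁₁‖ ^ 2) with hγ₁def
  set γ₂ : ℝ := μ₂ - 3 / 4 * (α₁ * ‖L₁₂‖ ^ 2) with hγ₂def
  have hn21 : (0 : ℝ) ≤ (α₁ + α₂) * ‖L₂₁‖ ^ 2 := by positivity
  have hn22 : (0 : ℝ) ≤ (α₁ + α₂) * ‖L₂₂‖ ^ 2 := by positivity
  have hγ₁pos : 0 < γ₁ := by rw [hγ₁def]; nlinarith
  have hγ₂pos : 0 < γ₂ := by rw [hγ₂def]; nlinarith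
  set γ : ℝ := min γ₁ γ₂ with hγdef
  have hγpos : 0 < γ := lt_min hγ₁pos hγ₂pos
  have hγle1 : γ ≤ γ₁ := min_le_left _ _
  have hγle2 : γ ≤ γ₂ := min_le_right _ _
  clear_value γ
  clear_value γ₁ γ₂
  -- the coercivity estimate
  have key : ∀ v : H₁ × H₂,
      γ * (‖v.1‖ ^ 2 + ‖v.2‖ ^ 2) ≤ (inner ℝ (𝕃 v).1 v.1 : ℝ) + (inner ℝ (𝕃 v).2 v.2 : ℝ) := by
    intro v
    simp only [h𝕃]
    set a : K₁ := L₁₁ v.1 with ha_def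
    set b : K₁ := L₁₂ v.2 with hb_def
    have e1 : (inner ℝ (α₁ • (adjoint L₁₁) (a + b) + μ₁ • v.1) v.1 : ℝ)
        = α₁ * ((inner ℝ (a + b) a : ℝ)) + μ₁ * ‖v.1‖ ^ 2 := by
      rw [inner_add_left, real_inner_smul_left, real_inner_smul_left,
        ContinuousLinearMap.adjoint_inner_left, real_inner_self_eq_norm_sq]
    have e2 : (inner ℝ (α₂ • (adjoint L₁₂) (a + b) + μ₂ • v.2) v.2 : ℝ)
        = α₂ * ((inner ℝ (a + b) b : ℝ)) + μ₂ * ‖v.2‖ ^ 2 := by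
      rw [inner_add_left, real_inner_smul_left, real_inner_smul_left,
        ContinuousLinearMap.adjoint_inner_left, real_inner_self_eq_norm_sq]
    rw [e1, e2]
    have e3 : (inner ℝ (a + b) a : ℝ) = ‖a‖ ^ 2 + (inner ℝ a b : ℝ) := by
      rw [inner_add_left, real_inner_self_eq_norm_sq, real_inner_comm]
    have e4 : (inner ℝ (a + b) b : ℝ) = (inner ℝ a b : ℝ) + ‖b‖ ^ 2 := by
      rw [inner_add_left, real_inner_self_eq_norm_sq]
    rw [e3, e4]
    have hab : -(‖a‖ * ‖b‖) ≤ (inner ℝ a b : ℝ) :=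
      (abs_le.mp (abs_real_inner_le_norm a b)).1
    have habs : -((α₁ + α₂) * (‖a‖ * ‖b‖)) ≤ (α₁ + α₂) * (inner ℝ a b : ℝ) := by
      have := mul_le_mul_of_nonneg_left hab (by positivity : (0:ℝ) ≤ α₁ + α₂)
      linarith
    have h1 : -(3 / 4 * α₂ * ‖a‖ ^ 2 + 3 / 4 * α₁ * ‖b‖ ^ 2)
        ≤ α₁ * ‖a‖ ^ 2 + α₂ * ‖b‖ ^ 2 - (α₁ + α₂) * (‖a‖ * ‖b‖) := by
      linarith [mul_nonneg hα₁.le (sq_nonneg (‖a‖ - ‖b‖ / 2)),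
        mul_nonneg hα₂.le (sq_nonneg (‖b‖ - ‖a‖ / 2)),
        mul_nonneg hα₂.le (sq_nonneg ‖a‖), mul_nonneg hα₁.le (sq_nonneg ‖b‖)]
    have hx2 : ‖a‖ ^ 2 ≤ ‖L₁₁‖ ^ 2 * ‖v.1‖ ^ 2 := by
      calc ‖a‖ ^ 2 ≤ (‖L₁₁‖ * ‖v.1‖) ^ 2 :=
            pow_le_pow_left₀ (norm_nonneg a) (L₁₁.le_opNorm v.1) 2
        _ = ‖L₁₁‖ ^ 2 * ‖v.1‖ ^ 2 := by ring
    have hy2 : ‖b‖ ^ 2 ≤ ‖L₁₂‖ ^ 2 * ‖v.2‖ ^ 2 := by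
      calc ‖b‖ ^ 2 ≤ (‖L₁₂‖ * ‖v.2‖) ^ 2 :=
            pow_le_pow_left₀ (norm_nonneg b) (L₁₂.le_opNorm v.2) 2
        _ = ‖L₁₂‖ ^ 2 * ‖v.2‖ ^ 2 := by ring
    have h2 : 3 / 4 * α₂ * ‖a‖ ^ 2 ≤ 3 / 4 * α₂ * (‖L₁₁‖ ^ 2 * ‖v.1‖ ^ 2) :=
      mul_le_mul_of_nonneg_left hx2 (by positivity)
    have h3 : 3 / 4 * α₁ * ‖b‖ ^ 2 ≤ 3 / 4 * α₁ * (‖L₁₂‖ ^ 2 * ‖v.2‖ ^ 2) :=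
      mul_le_mul_of_nonneg_left hy2 (by positivity)
    have hγp : γ * ‖v.1‖ ^ 2 ≤ γ₁ * ‖v.1‖ ^ 2 :=
      mul_le_mul_of_nonneg_right hγle1 (sq_nonneg _)
    have hγq : γ * ‖v.2‖ ^ 2 ≤ γ₂ * ‖v.2‖ ^ 2 :=
      mul_le_mul_of_nonneg_right hγle2 (sq_nonneg _)
    have hγ1p : γ₁ * ‖v.1‖ ^ 2
        = μ₁ * ‖v.1‖ ^ 2 - 3 / 4 * α₂ * (‖L₁₁‖ ^ 2 * ‖v.1‖ ^ 2) := by rw [hγ₁def]; ring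
    have hγ2q : γ₂ * ‖v.2‖ ^ 2
        = μ₂ * ‖v.2‖ ^ 2 - 3 / 4 * α₁ * (‖L₁₂‖ ^ 2 * ‖v.2‖ ^ 2) := by rw [hγ₂def]; ring
    linarith [habs, h1, h2, h3, hγp, hγq, hγ1p, hγ2q]
  refine ⟨⟨γ, hγpos, key⟩, ?_⟩
  -- bijectivity via Lax–Milgram on the L² product
  set T : (H₁ × H₂) →L[ℝ] H₁ × H₂ :=
    ((α₁ • ((adjoint L₁₁).comp ((L₁₁.comp (fst ℝ H₁ H₂)) + (L₁₂.comp (snd ℝ H₁ H₂)))) +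
      μ₁ • (fst ℝ H₁ H₂)).prod
     ((α₂ • ((adjoint L₁₂).comp ((L₁₁.comp (fst ℝ H₁ H₂)) + (L₁₂.comp (snd ℝ H₁ H₂)))) +
      μ₂ • (snd ℝ H₁ H₂)))) with hTdef
  have hTeq : ∀ v, 𝕃 v = T v := by
    intro v
    rw [h𝕃, hTdef]
    simp [ContinuousLinearMap.prod_apply]
  set e : WithLp 2 (H₁ × H₂) ≃L[ℝ] H₁ × H₂ := WithLp.prodContinuousLinearEquiv 2 ℝ H₁ H₂
    with hedef
  set T' : WithLp 2 (H₁ × H₂) →L[ℝ] WithLp 2 (H₁ × H₂) :=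
    ((e.symm : (H₁ × H₂) →L[ℝ] WithLp 2 (H₁ × H₂)).comp
      (T.comp (e : WithLp 2 (H₁ × H₂) →L[ℝ] H₁ × H₂))) with hT'def
  set B : WithLp 2 (H₁ × H₂) →L[ℝ] WithLp 2 (H₁ × H₂) →L[ℝ] ℝ :=
    (innerSL ℝ).comp T' with hBdef
  have hBapp : ∀ u w : WithLp 2 (H₁ × H₂), B u w = (inner ℝ (T' u) w : ℝ) := fun u w => rfl
  have coercive : IsCoercive B := by
    refine ⟨γ, hγpos, fun u => ?_⟩
    have h1 := key (e u)
    rw [hTeq] at h1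
    have hT'u : T' u = e.symm (T (e u)) := rfl
    have hfst : (T' u).fst = (T (e u)).1 := by rw [hT'u]; rfl
    have hsnd : (T' u).snd = (T (e u)).2 := by rw [hT'u]; rfl
    have hinner : B u u = (inner ℝ (T (e u)).1 (e u).1 : ℝ) + (inner ℝ (T (e u)).2 (e u).2 : ℝ) := by
      rw [hBapp, WithLp.prod_inner_apply]
      rfl
    have hnorm : ‖u‖ ^ 2 = ‖(e u).1‖ ^ 2 + ‖(e u).2‖ ^ 2 := by
      rw [WithLp.prod_norm_sq_eq_of_L2]
      rfl
    rw [hinner]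
    calc γ * ‖u‖ * ‖u‖ = γ * (‖(e u).1‖ ^ 2 + ‖(e u).2‖ ^ 2) := by
          rw [← hnorm]; ring
      _ ≤ _ := h1
  have hT'bij : Function.Bijective T' := by
    have heq : ∀ u, T' u = coercive.continuousLinearEquivOfBilin u := by
      intro u
      refine coercive.unique_continuousLinearEquivOfBilin fun w => ?_
      rw [hBapp]
    have : (T' : WithLp 2 (H₁ × H₂) → WithLp 2 (H₁ × H₂))
        = coercive.continuousLinearEquivOfBilin := funext heq
    rw [this]
    exact coercive.continuousLinearEquivOfBilin.bijective
  have h𝕃eq : 𝕃 = (e : WithLp 2 (H₁ × H₂) → H₁ × H₂) ∘ T' ∘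
      (e.symm : H₁ × H₂ → WithLp 2 (H₁ × H₂)) := by
    funext v
    simp only [Function.comp_apply, hT'def, ContinuousLinearMap.comp_apply,
      ContinuousLinearEquiv.coe_coe, ContinuousLinearEquiv.apply_symm_apply]
    rw [hTeq]
  rw [h𝕃eq]
  exact (e.bijective).comp (hT'bij.comp e.symm.bijective)
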